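/- arXiv:1304.3380 — 4 statements merged into one kernel-verified Lean document; each statement's English description precedes it below -/
import Mathlib

section
/- The explicit update formula solves the implicit Euler-backward equation up to normalization: let C̄ be unimodular symmetric positive definite and C_i^n symmetric positive definite, κ > 0. Define Φ := C_i^n + κ·C̄ and X := (1 - (κ/3)·tr(C·Φ^{-1}))·Φ where C := C̄ (unimodular case). Then X satisfies the Euler-backward equation X = C_i^n + κ·(C̄·X^{-1} - (1/3)tr(C̄·X^{-1})·I)·X, provided 1 - (κ/3)·tr(C̄·Φ^{-1}) > 0. -/
open Matrix

/-- Deviatoric part of a 3×3 matrix. -/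
noncomputable def dev (A : Matrix (Fin 3) (Fin 3) ℝ) : Matrix (Fin 3) (Fin 3) ℝ :=
  A - (A.trace / 3) • (1 : Matrix (Fin 3) (Fin 3) ℝ)

/-- The closed-form expression solves the implicit Euler-backward equation. -/
theorem explicit_solves_EBM (Cbar Cin : Matrix (Fin 3) (Fin 3) ℝ)
    (hCbar : Cbar.PosDef) (hCbar_det : Cbar.det = 1) (hCin : Cin.PosDef)
    (κ : ℝ) (hκ : 0 < κ)
    (Φ : Matrix (Fin 3) (Fin 3) ℝ) (hΦ : Φ = Cin + κ • Cbar)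
    (X : Matrix (Fin 3) (Fin 3) ℝ)
    (hX : X = (1 - κ / 3 * (Cbar * Φ⁻¹).trace) • Φ)
    (hpos : 0 < 1 - κ / 3 * (Cbar * Φ⁻¹).trace) :
    X = Cin + κ • (dev (Cbar * X⁻¹) * X) := by
  -- Φ is positive definite, hence invertible
  have hΦpd : Φ.PosDef := by
    rw [hΦ]
    refine hCin.add_posSemidef ?_
    refine ⟨?_, fun x => ?_⟩
    · show (κ • Cbar)ᴴ = _
      rw [conjTranspose_smul, hCbar.isHermitian.eq]
      simp
    rw [show (x.sum fun i xi => x.sum fun j xj => star xi * (κ • Cbar) i j * xj)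
        = κ * (x.sum fun i xi => x.sum fun j xj => star xi * Cbar i j * xj) by
      rw [Finsupp.mul_sum]
      refine Finsupp.sum_congr fun i _ => ?_
      rw [Finsupp.mul_sum]
      refine Finsupp.sum_congr fun j _ => ?_
      rw [Matrix.smul_apply, smul_eq_mul]
      ring]
    have := hCbar.posSemidef.2 x
    positivity
  have hΦu : IsUnit Φ.det := isUnit_iff_isUnit_det _ |>.1 hΦpd.isUnit
  set c : ℝ := 1 - κ / 3 * (Cbar * Φ⁻¹).trace with hc
  have hc0 : c ≠ 0 := ne_of_gt hpos
  have hXinv : X⁻¹ = c⁻¹ • Φ⁻¹ := by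
    rw [hX]
    apply Matrix.inv_eq_left_inv
    rw [Matrix.smul_mul, Matrix.mul_smul, smul_smul, inv_mul_cancel₀ hc0,
      one_smul, Matrix.nonsing_inv_mul _ hΦu]
  have hXΦ : X⁻¹ * X = 1 := by
    rw [hXinv, hX, Matrix.smul_mul, Matrix.mul_smul, smul_smul,
      inv_mul_cancel₀ hc0, one_smul, Matrix.nonsing_inv_mul _ hΦu]
  have htr : (Cbar * X⁻¹).trace = c⁻¹ * (Cbar * Φ⁻¹).trace := by
    rw [hXinv, Matrix.mul_smul, trace_smul, smul_eq_mul]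
  -- expand dev
  rw [dev, Matrix.sub_mul, Matrix.mul_assoc, hXΦ, Matrix.mul_one,
    Matrix.smul_mul, Matrix.one_mul, htr, smul_sub, hX]
  have h1 : κ • ((c⁻¹ * (Cbar * Φ⁻¹).trace / 3) • (c • Φ))
      = (κ * (Cbar * Φ⁻¹).trace / 3) • Φ := by
    rw [smul_smul, smul_smul]
    congr 1
    field_simp
  rw [h1, hc]
  have hCin' : Cin = Φ - κ • Cbar := by rw [hΦ]; abel
  rw [hCin']
  module
end

section
/- If X is a 3×3 real matrix satisfying X = C_i^n + κ·(C̄·X^{-1})^D·X with κ ≥ 0, where (·)^D denotes the deviatoric part, then X = (1/(1+β))·(C_i^n + κ·C̄) where β := (κ/3)·tr(C̄·X^{-1}). In particular, X is a scalar multiple of C_i^n + κ·C̄. -/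
open Matrix

/-- Any solution of the discretized Euler-backward equation is a scalar multiple
of `Cin + κ • Cbar`. -/
theorem EBM_solution_form (Cbar Cin : Matrix (Fin 3) (Fin 3) ℝ)
    (hCbar : Cbar.PosDef) (hCin : Cin.PosDef)
    (κ : ℝ) (hκ : 0 ≤ κ)
    (X : Matrix (Fin 3) (Fin 3) ℝ) (hXinv : IsUnit X.det)
    (hX : X = Cin + κ • (dev (Cbar * X⁻¹) * X))
    (hβ : 1 + κ / 3 * (Cbar * X⁻¹).trace ≠ 0) :
    X = (1 / (1 + κ / 3 * (Cbar * X⁻¹).trace)) • (Cin + κ • Cbar) := by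
  set t := (Cbar * X⁻¹).trace with ht
  have hinv : X⁻¹ * X = 1 := nonsing_inv_mul X hXinv
  have key : dev (Cbar * X⁻¹) * X = Cbar - (t / 3) • X := by
    simp [dev, sub_mul, Matrix.smul_mul, Matrix.mul_assoc, hinv, ← ht]
  rw [key] at hX
  have h1 : (1 + κ / 3 * t) • X = Cin + κ • Cbar := by
    have := hX
    rw [smul_sub] at this
    rw [add_smul, one_smul]
    have : X + (κ / 3 * t) • X = Cin + κ • Cbar := by
      nth_rewrite 1 [this]
      rw [smul_smul]
      ring_nf
      abel
    convert this using 2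
  rw [← h1, smul_smul, one_div, inv_mul_cancel₀ hβ, one_smul]
end

section
/- Monotone energy decay during stress relaxation: let C_i⁰ be symmetric positive definite with det C_i⁰ = 1, and define for t ≥ 0, Φ(t) := C_i⁰ + t·I and C_i(t) := (det Φ(t))^{-1/3}·Φ(t). Then the function f(t) := tr(C_i(t)^{-1}) satisfies f'(t) = -(det Φ(t))^{1/3}·‖(Φ(t)^{-1})^D‖² ≤ 0, where A^D = A - (1/3)tr(A)I and ‖·‖ is the Frobenius norm; in particular f is nonincreasing. -/
open Matrix

/-- Squared Frobenius norm of a real matrix. -/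
noncomputable def frobSq (A : Matrix (Fin 3) (Fin 3) ℝ) : ℝ :=
  (A * Aᵀ).trace

/-- Determinant of `C₀ + t I` as an explicit cubic. -/
noncomputable def Dcub (a b c p q r s : ℝ) : ℝ :=
  s ^ 3 + (a + p + r) * s ^ 2 + (a * p + a * r + p * r - b ^ 2 - c ^ 2 - q ^ 2) * s +
    (a * p * r - a * q ^ 2 - b ^ 2 * r + 2 * b * c * q - c ^ 2 * p)

/-- Trace of the adjugate of `C₀ + t I`, which is also the derivative of the determinant. -/
noncomputable def Qquad (a b c p q r s : ℝ) : ℝ :=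
  3 * s ^ 2 + 2 * (a + p + r) * s + (a * p + a * r + p * r - b ^ 2 - c ^ 2 - q ^ 2)

lemma hasDerivAt_Dcub (a b c p q r t : ℝ) :
    HasDerivAt (fun s => Dcub a b c p q r s) (Qquad a b c p q r t) t := by
  have h := (((hasDerivAt_pow 3 t).add
      ((hasDerivAt_pow 2 t).const_mul (a + p + r))).add
      ((hasDerivAt_id' t).const_mul
        (a * p + a * r + p * r - b ^ 2 - c ^ 2 - q ^ 2))).add_const
      (a * p * r - a * q ^ 2 - b ^ 2 * r + 2 * b * c * q - c ^ 2 * p)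
  refine h.congr_deriv ?_
  simp only [Qquad]; push_cast; ring

lemma hasDerivAt_Qquad (a b c p q r t : ℝ) :
    HasDerivAt (fun s => Qquad a b c p q r s) (6 * t + 2 * (a + p + r)) t := by
  have h := (((hasDerivAt_pow 2 t).const_mul (3 : ℝ)).add
      ((hasDerivAt_id' t).const_mul (2 * (a + p + r)))).add_const
      (a * p + a * r + p * r - b ^ 2 - c ^ 2 - q ^ 2)
  refine h.congr_deriv ?_
  push_cast; ring

lemma frobSq_nonneg (A : Matrix (Fin 3) (Fin 3) ℝ) : 0 ≤ frobSq A := by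
  unfold frobSq
  rw [Matrix.trace_fin_three]
  simp only [Matrix.mul_apply, Fin.sum_univ_three, Matrix.transpose_apply]
  nlinarith [mul_self_nonneg (A 0 0), mul_self_nonneg (A 0 1), mul_self_nonneg (A 0 2),
    mul_self_nonneg (A 1 0), mul_self_nonneg (A 1 1), mul_self_nonneg (A 1 2),
    mul_self_nonneg (A 2 0), mul_self_nonneg (A 2 1), mul_self_nonneg (A 2 2)]

lemma dev_smul (s : ℝ) (A : Matrix (Fin 3) (Fin 3) ℝ) : dev (s • A) = s • dev A := by
  simp only [dev, Matrix.trace_smul, smul_eq_mul, smul_sub, smul_smul]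
  rw [mul_div_assoc]

lemma frobSq_smul (s : ℝ) (A : Matrix (Fin 3) (Fin 3) ℝ) :
    frobSq (s • A) = s ^ 2 * frobSq A := by
  simp only [frobSq, Matrix.transpose_smul, Matrix.smul_mul, Matrix.mul_smul,
    Matrix.trace_smul, smul_eq_mul, smul_smul]
  ring

lemma det_lit (a b c p q r s : ℝ) :
    (!![a + s, b, c; b, p + s, q; c, q, r + s]).det = Dcub a b c p q r s := by
  simp [Matrix.det_fin_three, Dcub]; ring

lemma adj_trace_lit (a b c p q r s : ℝ) :
    (adjugate !![a + s, b, c; b, p + s, q; c, q, r + s]).trace = Qquad a b c p q r s := by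
  simp [Matrix.adjugate_fin_three_of, Matrix.trace_fin_three, Qquad]; ring

set_option maxHeartbeats 2000000 in
lemma key_identity (a b c p q r t : ℝ) :
    Dcub a b c p q r t * (6 * t + 2 * (a + p + r)) -
      2 / 3 * Qquad a b c p q r t * Qquad a b c p q r t =
    -frobSq (dev (adjugate !![a + t, b, c; b, p + t, q; c, q, r + t])) := by
  rw [Matrix.adjugate_fin_three_of]
  simp only [frobSq, dev, Matrix.trace_fin_three, Matrix.sub_apply, Matrix.smul_apply,
    Matrix.mul_apply, Fin.sum_univ_three, Matrix.transpose_apply, Matrix.one_apply_eq,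
    Matrix.cons_val', Matrix.cons_val_zero, Matrix.cons_val_one,
    Matrix.head_cons, Matrix.empty_val', Matrix.cons_val_fin_one, Matrix.head_fin_const,
    Matrix.cons_val_two, Matrix.tail_cons, Dcub, Qquad, smul_eq_mul]
  simp [Matrix.one_apply, Fin.ext_iff, Matrix.cons_val]
  ring

lemma rpow_cube_inv {d : ℝ} (hd : 0 < d) : (d ^ (-(1 : ℝ) / 3))⁻¹ = d ^ ((1 : ℝ) / 3) := by
  have h : -(1 : ℝ) / 3 = -(1 / 3) := by norm_num
  rw [h, Real.rpow_neg hd.le, inv_inv]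

lemma rpow_third_mul_inv {d : ℝ} (hd : 0 < d) :
    d ^ ((1 : ℝ) / 3) * d⁻¹ = d ^ (-(2 : ℝ) / 3) := by
  rw [← Real.rpow_neg_one d, ← Real.rpow_add hd]
  norm_num

/-- Monotone energy decay during stress relaxation. -/
theorem energy_decay_relaxation (Ci0 : Matrix (Fin 3) (Fin 3) ℝ)
    (hCi0 : Ci0.PosDef) (hCi0_symm : Ci0.IsSymm) (hCi0_det : Ci0.det = 1)
    (Φ : ℝ → Matrix (Fin 3) (Fin 3) ℝ)
    (hΦ : ∀ t, Φ t = Ci0 + t • (1 : Matrix (Fin 3) (Fin 3) ℝ))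
    (Ci : ℝ → Matrix (Fin 3) (Fin 3) ℝ)
    (hCi : ∀ t, Ci t = ((Φ t).det ^ (-(1 : ℝ) / 3)) • Φ t)
    (f : ℝ → ℝ) (hf : ∀ t, f t = ((Ci t)⁻¹).trace) :
    (∀ t, 0 ≤ t →
        HasDerivAt f (-((Φ t).det ^ ((1 : ℝ) / 3) * frobSq (dev ((Φ t)⁻¹)))) t ∧
        -((Φ t).det ^ ((1 : ℝ) / 3) * frobSq (dev ((Φ t)⁻¹))) ≤ 0) ∧
      AntitoneOn f (Set.Ici 0) := by
  set a := Ci0 0 0 with ha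
  set b := Ci0 0 1 with hb
  set c := Ci0 0 2 with hc
  set p := Ci0 1 1 with hp
  set q := Ci0 1 2 with hq
  set r := Ci0 2 2 with hr
  have hs10 : Ci0 1 0 = b := hCi0_symm.apply 0 1
  have hs20 : Ci0 2 0 = c := hCi0_symm.apply 0 2
  have hs21 : Ci0 2 1 = q := hCi0_symm.apply 1 2
  have hM : ∀ s : ℝ, Φ s = !![a + s, b, c; b, p + s, q; c, q, r + s] := by
    intro s
    rw [hΦ]
    ext i j
    fin_cases i <;> fin_cases j <;>
      simp [Matrix.add_apply, Matrix.smul_apply, Matrix.one_apply, hs10, hs20, hs21,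
        ha, hb, hc, hp, hq, hr]
  have hdet : ∀ s : ℝ, (Φ s).det = Dcub a b c p q r s := by
    intro s; rw [hM s, det_lit]
  have hadjtr : ∀ s : ℝ, (adjugate (Φ s)).trace = Qquad a b c p q r s := by
    intro s; rw [hM s, adj_trace_lit]
  -- f agrees with the explicit formula wherever the determinant is positive
  have hfeq : ∀ s : ℝ, 0 < Dcub a b c p q r s →
      f s = Dcub a b c p q r s ^ (-(2 : ℝ) / 3) * Qquad a b c p q r s := by
    intro s hs
    have hds : (Φ s).det = Dcub a b c p q r s := hdet s
    have hdpos : 0 < (Φ s).det := hds ▸ hs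
    have hdet_ne : (Φ s).det ≠ 0 := hdpos.ne'
    have hinv : (Φ s)⁻¹ = ((Φ s).det)⁻¹ • adjugate (Φ s) := by
      rw [Matrix.inv_def, Ring.inverse_eq_inv]
    have hs0pos : 0 < (Φ s).det ^ (-(1 : ℝ) / 3) := Real.rpow_pos_of_pos hdpos _
    have hCiinv : (Ci s)⁻¹ = ((Φ s).det ^ (-(1 : ℝ) / 3))⁻¹ • (Φ s)⁻¹ := by
      apply Matrix.inv_eq_right_inv
      rw [hCi s, Matrix.smul_mul, Matrix.mul_smul, smul_smul,
        mul_inv_cancel₀ hs0pos.ne', one_smul, Matrix.mul_nonsing_inv _ (isUnit_iff_ne_zero.mpr hdet_ne)]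
    rw [hf s, hCiinv, Matrix.trace_smul, hinv, Matrix.trace_smul, hadjtr s,
      rpow_cube_inv hdpos, hds]
    rw [smul_eq_mul, smul_eq_mul, ← mul_assoc, rpow_third_mul_inv hs]
  have hmain : ∀ t : ℝ, 0 ≤ t →
      HasDerivAt f (-((Φ t).det ^ ((1 : ℝ) / 3) * frobSq (dev ((Φ t)⁻¹)))) t ∧
      -((Φ t).det ^ ((1 : ℝ) / 3) * frobSq (dev ((Φ t)⁻¹))) ≤ 0 := by
    intro t ht
    have hpos : (Φ t).PosDef := by
      rw [hΦ t]
      refine hCi0.add_posSemidef ?_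
      rw [Matrix.smul_one_eq_diagonal]
      exact Matrix.posSemidef_diagonal_iff.mpr fun _ => ht
    have hDpos : 0 < Dcub a b c p q r t := (hdet t) ▸ hpos.det_pos
    constructor
    · -- the derivative
      have hD := hasDerivAt_Dcub a b c p q r t
      have hQ := hasDerivAt_Qquad a b c p q r t
      have hrpow : HasDerivAt (fun s => Dcub a b c p q r s ^ (-(2 : ℝ) / 3))
          ((-(2 : ℝ) / 3 * Dcub a b c p q r t ^ (-(2 : ℝ) / 3 - 1)) * Qquad a b c p q r t) t :=
        (Real.hasDerivAt_rpow_const (Or.inl hDpos.ne')).comp t hD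
      have hF := hrpow.mul (hasDerivAt_Qquad a b c p q r t)
      have hev : f =ᶠ[nhds t]
          fun s => Dcub a b c p q r s ^ (-(2 : ℝ) / 3) * Qquad a b c p q r s := by
        have hcont : ContinuousAt (fun s => Dcub a b c p q r s) t := hD.continuousAt
        have hmem : ∀ᶠ s in nhds t, 0 < Dcub a b c p q r s :=
          hcont.eventually (eventually_gt_nhds hDpos)
        filter_upwards [hmem] with s hs using hfeq s hs
      have hF' : HasDerivAt f
          ((-(2 : ℝ) / 3 * Dcub a b c p q r t ^ (-(2 : ℝ) / 3 - 1)) * Qquad a b c p q r t *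
              Qquad a b c p q r t +
            Dcub a b c p q r t ^ (-(2 : ℝ) / 3) * (6 * t + 2 * (a + p + r))) t :=
        hF.congr_of_eventuallyEq hev
      convert hF' using 1
      -- identify the derivative value
      have hinv : (Φ t)⁻¹ = (Dcub a b c p q r t)⁻¹ • adjugate (Φ t) := by
        rw [Matrix.inv_def, Ring.inverse_eq_inv, hdet t]
      have hfro : frobSq (dev ((Φ t)⁻¹)) =
          ((Dcub a b c p q r t)⁻¹) ^ 2 * frobSq (dev (adjugate (Φ t))) := by
        rw [hinv, dev_smul, frobSq_smul]
      have hkey : Dcub a b c p q r t * (6 * t + 2 * (a + p + r)) -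
          2 / 3 * Qquad a b c p q r t * Qquad a b c p q r t =
          -frobSq (dev (adjugate (Φ t))) := by
        rw [hM t]; exact key_identity a b c p q r t
      set d := Dcub a b c p q r t with hd
      have hu1 : d ^ ((1 : ℝ) / 3) * (d⁻¹) ^ 2 = d ^ (-(5 : ℝ) / 3) := by
        rw [← Real.rpow_neg_one d, ← Real.rpow_natCast (d ^ (-1 : ℝ)) 2,
          ← Real.rpow_mul hDpos.le, ← Real.rpow_add hDpos]
        norm_num
      have hu2 : d ^ (-(2 : ℝ) / 3 - 1) = d ^ (-(5 : ℝ) / 3) := by norm_num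
      have hu3 : d ^ (-(2 : ℝ) / 3) = d ^ (-(5 : ℝ) / 3) * d := by
        rw [← Real.rpow_add_one hDpos.ne' (-(5 : ℝ) / 3)]
        norm_num
      rw [hfro, hdet t, ← hd, hu2, hu3, ← mul_assoc, mul_comm (d ^ ((1 : ℝ) / 3))]
      rw [show (d⁻¹) ^ 2 * d ^ ((1 : ℝ) / 3) = d ^ (-(5 : ℝ) / 3) by
        rw [← hu1]; ring]
      set u := d ^ (-(5 : ℝ) / 3) with hu
      linear_combination (-u) * hkey
    · -- nonpositivity
      have h1 : (0 : ℝ) ≤ (Φ t).det ^ ((1 : ℝ) / 3) :=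
        (Real.rpow_pos_of_pos hpos.det_pos _).le
      have h2 := frobSq_nonneg (dev ((Φ t)⁻¹))
      nlinarith
  refine ⟨hmain, ?_⟩
  apply antitoneOn_of_deriv_nonpos (convex_Ici 0)
  · intro x hx
    exact ((hmain x hx).1.continuousAt).continuousWithinAt
  · rw [interior_Ici]
    intro x hx
    exact ((hmain x (le_of_lt hx)).1.differentiableAt).differentiableWithinAt
  · intro x hx
    rw [interior_Ici] at hx
    rw [(hmain x hx.le).1.deriv]
    exact (hmain x hx.le).2
end

section
/- Stability bound of the update: for symmetric positive definite C_i^n with det C_i^n = 1, unimodular symmetric positive definite C̄, and κ ≥ 0, the eigenvalues of the update C_i^{n+1} := unimodular part of (C_i^n + κ C̄) are bounded: λ_max(C_i^{n+1}) ≤ (λ_max(C_i^n) + κ·λ_max(C̄)) / (det(C_i^n + κ C̄))^{1/3}, and det(C_i^n + κ C̄) ≥ det(C_i^n) = 1. Hence the numerical solution remains bounded for arbitrary κ in terms of C_i^n and C̄. -/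
open Matrix


namespace StabilityAux

variable {n : Type*} [Fintype n] [DecidableEq n]

lemma posSemidef_smul {A : Matrix n n ℝ} (hA : A.PosSemidef) {c : ℝ} (hc : 0 ≤ c) :
    (c • A).PosSemidef := by
  refine .of_dotProduct_mulVec_nonneg ?_ fun x => ?_
  · unfold Matrix.IsHermitian
    rw [conjTranspose_smul, hA.1]
    simp
  · rw [smul_mulVec, dotProduct_smul, smul_eq_mul]
    exact mul_nonneg hc (hA.dotProduct_mulVec_nonneg x)

lemma unit_dot {A : Matrix n n ℝ} (hA : A.IsHermitian) (i : n) :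
    (⇑(hA.eigenvectorBasis i) : n → ℝ) ⬝ᵥ ⇑(hA.eigenvectorBasis i) = 1 := by
  have h := hA.eigenvectorBasis.orthonormal.1 i
  have h2 : (inner ℝ (hA.eigenvectorBasis i) (hA.eigenvectorBasis i) : ℝ) = 1 := by
    rw [real_inner_self_eq_norm_sq, h]; norm_num
  rw [EuclideanSpace.inner_eq_star_dotProduct] at h2
  simpa using h2

lemma smul_one_sub_posSemidef {A : Matrix n n ℝ} (hA : A.IsHermitian) {μ : ℝ}
    (hμ : ∀ i, hA.eigenvalues i ≤ μ) :
    (μ • (1 : Matrix n n ℝ) - A).PosSemidef := by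
  have hU : (hA.eigenvectorUnitary : Matrix n n ℝ) * (star hA.eigenvectorUnitary : Matrix n n ℝ)
      = 1 := (Matrix.mem_unitaryGroup_iff).mp hA.eigenvectorUnitary.2
  have key : μ • (1 : Matrix n n ℝ) - A =
      (hA.eigenvectorUnitary : Matrix n n ℝ) *
        diagonal (fun i => μ - hA.eigenvalues i) *
        (star hA.eigenvectorUnitary : Matrix n n ℝ) := by
    have hd : (diagonal (fun i => μ - hA.eigenvalues i) : Matrix n n ℝ)
        = μ • 1 - diagonal (RCLike.ofReal ∘ hA.eigenvalues) := by
      rw [smul_one_eq_diagonal, diagonal_sub]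
      rfl
    have hs := hA.spectral_theorem
    rw [Unitary.conjStarAlgAut_apply] at hs
    rw [hd, mul_sub, sub_mul, ← hs, Matrix.mul_smul, Matrix.mul_one,
      Matrix.smul_mul, hU]
  rw [key]
  exact (posSemidef_diagonal_iff.mpr fun i => by simpa using hμ i).mul_mul_conjTranspose_same _

lemma rayleigh_le {A : Matrix n n ℝ} (hA : A.IsHermitian) {μ : ℝ}
    (hμ : ∀ i, hA.eigenvalues i ≤ μ) (v : n → ℝ) :
    v ⬝ᵥ (A *ᵥ v) ≤ μ * (v ⬝ᵥ v) := by
  have h := (smul_one_sub_posSemidef hA hμ).dotProduct_mulVec_nonneg v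
  simp only [star_trivial, sub_mulVec, dotProduct_sub, smul_mulVec, one_mulVec,
    dotProduct_smul, smul_eq_mul] at h
  linarith

open scoped MatrixOrder in
/-- determinant monotonicity: det (A + B) ≥ det A for A posdef, B possemidef. -/
lemma det_le_det_add {A B : Matrix n n ℝ} (hA : A.PosDef) (hB : B.PosSemidef) :
    A.det ≤ (A + B).det := by
  classical
  set R := CFC.sqrt A with hRdef
  have hRps : R.PosSemidef := (CFC.sqrt_nonneg A).posSemidef
  have hRR : R * R = A := CFC.sqrt_mul_sqrt_self A hA.posSemidef.nonneg
  have hdetR : 0 < R.det := by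
    have h2 : R.det * R.det = A.det := by rw [← det_mul, hRR]
    have hnn : 0 ≤ R.det := by
      have := hRps.1.det_eq_prod_eigenvalues
      simp only [RCLike.ofReal_real_eq_id, id] at this
      rw [this]
      exact Finset.prod_nonneg fun i _ => hRps.eigenvalues_nonneg i
    nlinarith [hA.det_pos]
  have hRunit : IsUnit R.det := (isUnit_iff_ne_zero).mpr hdetR.ne'
  have hRinv : R * R⁻¹ = 1 := Matrix.mul_nonsing_inv R hRunit
  have hRinv' : R⁻¹ * R = 1 := Matrix.nonsing_inv_mul R hRunit
  have hRinvH : (R⁻¹).IsHermitian := by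
    have := Matrix.invertibleOfIsUnitDet R hRunit
    exact hRps.1.inv
  -- T := R⁻¹ * B * R⁻¹ is possemidef
  have hT : (R⁻¹ * B * R⁻¹).PosSemidef := by
    have := hB.conjTranspose_mul_mul_same (R⁻¹)
    rwa [hRinvH] at this
  set T := R⁻¹ * B * R⁻¹ with hTdef
  have hsplit : A + B = R * (1 + T) * R := by
    rw [hTdef, mul_add, add_mul, mul_one, hRR]
    congr 1
    calc B = (R * R⁻¹) * B * (R⁻¹ * R) := by rw [hRinv, hRinv', Matrix.one_mul, Matrix.mul_one]
      _ = R * (R⁻¹ * B * R⁻¹) * R := by simp only [Matrix.mul_assoc]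
  have h1T : (1 + T).PosSemidef := Matrix.PosSemidef.add .one hT
  have hdet1T : 1 ≤ (1 + T).det := by
    have hprod : (1 + T).det = ∏ i, h1T.1.eigenvalues i := by
      simpa using h1T.1.det_eq_prod_eigenvalues
    rw [hprod]
    calc (1:ℝ) = ∏ _i : n, 1 := by simp
      _ ≤ _ := Finset.prod_le_prod (fun i _ => zero_le_one) fun i _ => ?_
    have hev := h1T.1.eigenvalues_eq i
    set v : n → ℝ := ⇑(h1T.1.eigenvectorBasis i) with hv
    have hvv : v ⬝ᵥ v = 1 := unit_dot h1T.1 i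
    have hTv : 0 ≤ v ⬝ᵥ (T *ᵥ v) := by simpa using hT.dotProduct_mulVec_nonneg v
    have : h1T.1.eigenvalues i = v ⬝ᵥ ((1 + T) *ᵥ v) := by simpa using hev
    rw [this, add_mulVec, one_mulVec, dotProduct_add, hvv]
    linarith
  have hAd : A.det = R.det * R.det := by rw [← hRR, det_mul]
  have hABd : (A + B).det = R.det * (1 + T).det * R.det := by
    rw [hsplit, det_mul, det_mul]
  rw [hAd, hABd]
  nlinarith

end StabilityAux

/-- Stability bound of the explicit update: the largest eigenvalue of the
corrected update is controlled, and the determinant before normalization is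
at least one. -/
theorem update_stability_bound (Cin Cbar : Matrix (Fin 3) (Fin 3) ℝ)
    (hCin : Cin.PosDef) (hCin_det : Cin.det = 1)
    (hCbar : Cbar.PosDef) (hCbar_det : Cbar.det = 1)
    (κ : ℝ) (hκ : 0 ≤ κ)
    (Cnext : Matrix (Fin 3) (Fin 3) ℝ)
    (hCnext : Cnext = ((Cin + κ • Cbar).det ^ (-(1 : ℝ) / 3)) • (Cin + κ • Cbar))
    (hH : Cnext.IsHermitian) :
    (⨆ i, hH.eigenvalues i) ≤
      ((⨆ i, hCin.1.eigenvalues i) + κ * ⨆ i, hCbar.1.eigenvalues i) /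
        (Cin + κ • Cbar).det ^ ((1 : ℝ) / 3) ∧
    1 ≤ (Cin + κ • Cbar).det := by
  have hκC : (κ • Cbar).PosSemidef := StabilityAux.posSemidef_smul hCbar.posSemidef hκ
  have hdet1 : 1 ≤ (Cin + κ • Cbar).det := by
    have := StabilityAux.det_le_det_add hCin hκC
    rwa [hCin_det] at this
  have hdetpos : 0 < (Cin + κ • Cbar).det := lt_of_lt_of_le one_pos hdet1
  refine ⟨?_, hdet1⟩
  set a := ⨆ i, hCin.1.eigenvalues i with ha
  set b := ⨆ i, hCbar.1.eigenvalues i with hb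
  have hale : ∀ j, hCin.1.eigenvalues j ≤ a := fun j =>
    le_ciSup (Set.Finite.bddAbove (Set.finite_range _)) j
  have hble : ∀ j, hCbar.1.eigenvalues j ≤ b := fun j =>
    le_ciSup (Set.Finite.bddAbove (Set.finite_range _)) j
  set c : ℝ := (Cin + κ • Cbar).det ^ (-(1 : ℝ) / 3) with hc
  have hcpos : 0 < c := Real.rpow_pos_of_pos hdetpos _
  -- each eigenvalue of Cnext is bounded
  refine ciSup_le fun i => ?_
  set v : Fin 3 → ℝ := ⇑(hH.eigenvectorBasis i) with hv
  have hvv : v ⬝ᵥ v = 1 := StabilityAux.unit_dot hH i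
  have hev : hH.eigenvalues i = v ⬝ᵥ (Cnext *ᵥ v) := by
    simpa using hH.eigenvalues_eq i
  have hexp : v ⬝ᵥ (Cnext *ᵥ v) = c * (v ⬝ᵥ (Cin *ᵥ v) + κ * (v ⬝ᵥ (Cbar *ᵥ v))) := by
    rw [hCnext]
    rw [smul_mulVec, dotProduct_smul, add_mulVec, smul_mulVec, dotProduct_add,
      dotProduct_smul]
    simp [smul_eq_mul]
  have h1 : v ⬝ᵥ (Cin *ᵥ v) ≤ a := by
    have := StabilityAux.rayleigh_le hCin.1 hale v
    rwa [hvv, mul_one] at this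
  have h2 : v ⬝ᵥ (Cbar *ᵥ v) ≤ b := by
    have := StabilityAux.rayleigh_le hCbar.1 hble v
    rwa [hvv, mul_one] at this
  have hbound : hH.eigenvalues i ≤ c * (a + κ * b) := by
    rw [hev, hexp]
    have : v ⬝ᵥ (Cin *ᵥ v) + κ * (v ⬝ᵥ (Cbar *ᵥ v)) ≤ a + κ * b := by nlinarith
    nlinarith
  have hcform : c * (a + κ * b) = (a + κ * b) / (Cin + κ • Cbar).det ^ ((1 : ℝ) / 3) := by
    rw [hc, neg_div, Real.rpow_neg hdetpos.le, mul_comm, ← div_eq_mul_inv]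
  linarith [hbound, hcform.le, hcform.ge]
end
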